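/- Let c₀ ∈ ℝ, ε > 0, and let f be a twice continuously differentiable real function on [c₀ − ε, c₀] such that f(c₀) = 1 or f(c₀) = −1, and |f(r)| < 1 for all r ∈ [c₀ − ε, c₀). Then the function r ↦ f(r)/√(1 − f(r)²) is integrable on [c₀ − ε, c₀) (i.e. the improper integral ∫_{c₀−ε}^{c₀} f(r)/√(1 − f(r)²) dr is finite) if and only if f'(c₀) ≠ 0. -/

import Mathlib

open Set MeasureTheory

/-- Lemma (paper, Section 4): for `f ∈ C²[c₀-ε, c₀]` with `f(c₀) = ±1` and `|f| < 1`
on `[c₀-ε, c₀)`, the improper integral `∫ f/√(1-f²)` over `[c₀-ε, c₀)` is finite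
iff `f'(c₀) ≠ 0`. -/
theorem stmt_0 (c₀ ε : ℝ) (hε : 0 < ε) (f : ℝ → ℝ)
    (hf : ContDiffOn ℝ 2 f (Icc (c₀ - ε) c₀))
    (hfc : f c₀ = 1 ∨ f c₀ = -1)
    (hflt : ∀ r ∈ Ico (c₀ - ε) c₀, |f r| < 1) :
    IntegrableOn (fun r => f r / Real.sqrt (1 - f r ^ 2)) (Ico (c₀ - ε) c₀) ↔
      derivWithin f (Icc (c₀ - ε) c₀) c₀ ≠ 0 := by
  set a := c₀ - ε with ha
  set s := Icc a c₀ with hsdef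
  have hac : a < c₀ := by rw [ha]; linarith
  have hus : UniqueDiffOn ℝ s := uniqueDiffOn_Icc hac
  set f' := derivWithin f s with hf'def
  have hfd : ∀ r ∈ s, HasDerivWithinAt f (f' r) s r := fun r hr =>
    ((hf.differentiableOn (by norm_num)) r hr).hasDerivWithinAt
  have hf'cont : ContinuousOn f' s := hf.continuousOn_derivWithin hus (by norm_num)
  have hfcont : ContinuousOn f s := hf.continuousOn
  set g := fun r : ℝ => 1 - f r ^ 2 with hgdef
  set g' := fun r : ℝ => -(2 * f r * f' r) with hg'def
  have hgd : ∀ r ∈ s, HasDerivWithinAt g (g' r) s r := by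
    intro r hr
    have h1 := ((hfd r hr).pow 2).const_sub 1
    simpa [hg'def, pow_one] using h1
  have hgcont : ContinuousOn g s := continuousOn_const.sub (hfcont.pow 2)
  have hc₀s : c₀ ∈ s := right_mem_Icc.2 hac.le
  have hgpos : ∀ r ∈ Ico a c₀, 0 < g r := by
    intro r hr
    have h1 := hflt r hr
    have h2 : f r ^ 2 < 1 := by nlinarith [abs_nonneg (f r), sq_abs (f r)]
    simp only [hgdef]; linarith
  have hgc : g c₀ = 0 := by rcases hfc with h | h <;> simp [hgdef, h]
  have hgAt : ∀ x ∈ Ioo a c₀, HasDerivAt g (g' x) x := fun x hx =>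
    (hgd x (Ioo_subset_Icc_self hx)).hasDerivAt (Icc_mem_nhds hx.1 hx.2)
  -- mean value theorem for g on [r, c₀]
  have mvtg : ∀ r ∈ Ico a c₀, ∃ ξ ∈ Ioo r c₀, g r = -(g' ξ) * (c₀ - r) := by
    intro r hr
    obtain ⟨ξ, hξ, h⟩ := exists_hasDerivAt_eq_slope g g' hr.2
      (hgcont.mono (Icc_subset_Icc hr.1 le_rfl))
      (fun x hx => hgAt x ⟨lt_of_le_of_lt hr.1 hx.1, hx.2⟩)
    refine ⟨ξ, hξ, ?_⟩
    rw [hgc] at h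
    have hrc : (0:ℝ) < c₀ - r := sub_pos.2 hr.2
    field_simp at h
    linarith
  have hsqrtne : ∀ r ∈ Ico a c₀, Real.sqrt (g r) ≠ 0 :=
    fun r hr => ne_of_gt (Real.sqrt_pos.2 (hgpos r hr))
  have hIcoSub : Ico a c₀ ⊆ s := Ico_subset_Icc_self
  have hIntCont : ContinuousOn (fun r => f r / Real.sqrt (g r)) (Ico a c₀) :=
    (hfcont.mono hIcoSub).div
      (Real.continuous_sqrt.comp_continuousOn (hgcont.mono hIcoSub)) hsqrtne
  have hfc₀ : |f c₀| = 1 := by rcases hfc with h | h <;> simp [h]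
  have hcw : ContinuousWithinAt f s c₀ := hfcont c₀ hc₀s
  rw [Metric.continuousWithinAt_iff] at hcw
  constructor
  · -- integrable → f' c₀ ≠ 0 ; by contradiction
    intro hint
    intro hD
    have hg'c₀ : g' c₀ = 0 := by simp [hg'def, hD]
    have hf'C1 : ContDiffOn ℝ 1 f' s := hf.derivWithin hus (by norm_num)
    have hfC1 : ContDiffOn ℝ 1 f s := hf.of_le (by norm_num)
    have hg'C1 : ContDiffOn ℝ 1 g' s := ((contDiffOn_const.mul hfC1).mul hf'C1).neg
    set g'' := derivWithin g' s with hg''def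
    have hg'd : ∀ r ∈ s, HasDerivWithinAt g' (g'' r) s r := fun r hr =>
      ((hg'C1.differentiableOn one_ne_zero) r hr).hasDerivWithinAt
    have hg''cont : ContinuousOn g'' s := hg'C1.continuousOn_derivWithin hus le_rfl
    have hg'At : ∀ x ∈ Ioo a c₀, HasDerivAt g' (g'' x) x := fun x hx =>
      (hg'd x (Ioo_subset_Icc_self hx)).hasDerivAt (Icc_mem_nhds hx.1 hx.2)
    have hg'contOn : ContinuousOn g' s :=
      ((continuousOn_const.mul hfcont).mul hf'cont).neg
    obtain ⟨M₀, hM₀⟩ := isCompact_Icc.exists_bound_of_continuousOn hg''cont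
    set M := max M₀ 1 with hMdef
    have hM1 : (1:ℝ) ≤ M := le_max_right _ _
    have hMpos : (0:ℝ) < M := lt_of_lt_of_le one_pos hM1
    have hMb : ∀ x ∈ s, |g'' x| ≤ M := fun x hx =>
      le_trans (by simpa [Real.norm_eq_abs] using hM₀ x hx) (le_max_left _ _)
    -- key quadratic bound: g r ≤ M * (c₀ - r)^2 on Ico a c₀
    have hquad : ∀ r ∈ Ico a c₀, g r ≤ M * (c₀ - r) ^ 2 := by
      intro r hr
      obtain ⟨ξ, hξ, hgr⟩ := mvtg r hr
      have hξs : ξ ∈ Ico a c₀ := ⟨le_trans hr.1 hξ.1.le, hξ.2⟩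
      obtain ⟨η, hη, hslope⟩ := exists_hasDerivAt_eq_slope g' g'' hξ.2
        (hg'contOn.mono (Icc_subset_Icc hξs.1 le_rfl))
        (fun x hx => hg'At x ⟨lt_of_le_of_lt hξs.1 hx.1, hx.2⟩)
      have hξc : (0:ℝ) < c₀ - ξ := sub_pos.2 hξ.2
      have hg'ξ : |g' ξ| ≤ M * (c₀ - ξ) := by
        have hηs : η ∈ s := ⟨le_trans hξs.1 hη.1.le, hη.2.le⟩
        have h1 : g' ξ = -(g'' η) * (c₀ - ξ) := by
          rw [hg'c₀] at hslope
          field_simp at hslope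
          linarith
        rw [h1, abs_mul, abs_neg, abs_of_pos hξc]
        exact mul_le_mul_of_nonneg_right (hMb η hηs) hξc.le
      have hrc : (0:ℝ) < c₀ - r := sub_pos.2 hr.2
      calc g r = -(g' ξ) * (c₀ - r) := hgr
        _ ≤ |g' ξ| * (c₀ - r) :=
            mul_le_mul_of_nonneg_right (neg_le_abs _) hrc.le
        _ ≤ (M * (c₀ - ξ)) * (c₀ - r) := mul_le_mul_of_nonneg_right hg'ξ hrc.le
        _ ≤ (M * (c₀ - r)) * (c₀ - r) := mul_le_mul_of_nonneg_right
              (mul_le_mul_of_nonneg_left (by linarith [hξ.1]) hMpos.le) hrc.le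
        _ = M * (c₀ - r) ^ 2 := by ring
    -- choose δ so that |f| ≥ 1/2 near c₀
    obtain ⟨δ₀, hδ₀, hδ₀'⟩ := hcw (1/2) (by norm_num)
    set δ := min (δ₀ / 2) ε with hδdef
    have hδpos : 0 < δ := lt_min (by linarith) hε
    have hδε : δ ≤ ε := min_le_right _ _
    have hsub : Ico (c₀ - δ) c₀ ⊆ Ico a c₀ := Ico_subset_Ico (by rw [ha]; linarith) le_rfl
    have hfhalf : ∀ r ∈ Ico (c₀ - δ) c₀, (1:ℝ)/2 ≤ |f r| := by
      intro r hr
      have hrs : r ∈ s := hIcoSub (hsub hr)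
      have hdist : dist r c₀ < δ₀ := by
        rw [Real.dist_eq, abs_sub_comm, abs_of_pos (sub_pos.2 hr.2)]
        have h1 : c₀ - r ≤ δ := by linarith [hr.1]
        have h2 : δ ≤ δ₀ / 2 := min_le_left _ _
        linarith
      have h3 := hδ₀' hrs hdist
      rw [Real.dist_eq] at h3
      have h4 := abs_sub_abs_le_abs_sub (f c₀) (f r)
      rw [abs_sub_comm] at h3
      linarith [hfc₀ ▸ h4]
    -- derive integrability of (c₀ - r)⁻¹ on Ico (c₀ - δ) c₀, a contradiction
    have hI : IntegrableOn (fun r => f r / Real.sqrt (g r)) (Ico (c₀ - δ) c₀) :=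
      hint.mono_set hsub
    have hbound : IntegrableOn
        (fun r => (2 * Real.sqrt M) * ‖f r / Real.sqrt (g r)‖) (Ico (c₀ - δ) c₀) :=
      (hI.norm.const_mul _)
    have hmeas : AEStronglyMeasurable (fun r : ℝ => (c₀ - r)⁻¹)
        (volume.restrict (Ico (c₀ - δ) c₀)) :=
      (((measurable_const.sub measurable_id).inv)).aestronglyMeasurable
    have hae : ∀ᵐ r ∂(volume.restrict (Ico (c₀ - δ) c₀)),
        ‖(c₀ - r)⁻¹‖ ≤ (2 * Real.sqrt M) * ‖f r / Real.sqrt (g r)‖ := by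
      rw [ae_restrict_iff' measurableSet_Ico]
      refine ae_of_all _ fun r hr => ?_
      have hrIco : r ∈ Ico a c₀ := hsub hr
      have hrc : (0:ℝ) < c₀ - r := sub_pos.2 hr.2
      have hgp := hgpos r hrIco
      have hsq : (0:ℝ) < Real.sqrt (g r) := Real.sqrt_pos.2 hgp
      have hsqM : (0:ℝ) < Real.sqrt M := Real.sqrt_pos.2 hMpos
      have hgb : Real.sqrt (g r) ≤ Real.sqrt M * (c₀ - r) := by
        have := hquad r hrIco
        calc Real.sqrt (g r) ≤ Real.sqrt (M * (c₀ - r) ^ 2) := Real.sqrt_le_sqrt this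
          _ = Real.sqrt M * (c₀ - r) := by
              rw [Real.sqrt_mul hMpos.le, Real.sqrt_sq hrc.le]
      have hf2 := hfhalf r hr
      rw [Real.norm_eq_abs, Real.norm_eq_abs, abs_of_pos (inv_pos.2 hrc), abs_div,
        abs_of_pos hsq]
      have h2M : (0:ℝ) ≤ 2 * Real.sqrt M := by positivity
      have hgoal : (c₀ - r)⁻¹ * Real.sqrt (g r) ≤ 2 * Real.sqrt M * |f r| := by
        calc (c₀ - r)⁻¹ * Real.sqrt (g r) ≤ (c₀ - r)⁻¹ * (Real.sqrt M * (c₀ - r)) :=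
              mul_le_mul_of_nonneg_left hgb (inv_pos.2 hrc).le
          _ = Real.sqrt M := by field_simp
          _ ≤ 2 * Real.sqrt M * |f r| := by
              nlinarith [mul_le_mul_of_nonneg_left hf2 h2M]
      calc (c₀ - r)⁻¹ = ((c₀ - r)⁻¹ * Real.sqrt (g r)) / Real.sqrt (g r) := by
            field_simp
        _ ≤ (2 * Real.sqrt M * |f r|) / Real.sqrt (g r) := by gcongr
        _ = 2 * Real.sqrt M * (|f r| / Real.sqrt (g r)) := by ring
    have hcontra : IntegrableOn (fun r : ℝ => (c₀ - r)⁻¹) (Ico (c₀ - δ) c₀) :=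
      Integrable.mono' hbound hmeas hae
    have hcontra2 : IntegrableOn (fun r : ℝ => (r - c₀)⁻¹) (Ico (c₀ - δ) c₀) := by
      have hneg' : IntegrableOn (fun r : ℝ => -((c₀ - r)⁻¹)) (Ico (c₀ - δ) c₀) :=
        hcontra.neg
      refine IntegrableOn.congr_fun hneg' (fun x hx => ?_) measurableSet_Ico
      show -((c₀ - x)⁻¹) = (x - c₀)⁻¹
      rw [← inv_neg, neg_sub]
    have h3 : IntervalIntegrable (fun r : ℝ => (r - c₀)⁻¹) volume (c₀ - δ) c₀ := by
      rw [intervalIntegrable_iff_integrableOn_Ioc_of_le (by linarith)]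
      rw [integrableOn_Ioc_iff_integrableOn_Ioo]
      exact hcontra2.mono_set Ioo_subset_Ico_self
    rw [intervalIntegrable_sub_inv_iff] at h3
    rcases h3 with h3 | h3
    · linarith
    · exact h3 (right_mem_uIcc)
  · -- f' c₀ ≠ 0 → integrable
    intro hD
    have hg'c₀ : g' c₀ ≠ 0 := by
      simp only [hg'def, neg_ne_zero]
      intro h
      rcases mul_eq_zero.1 h with h | h
      · rcases mul_eq_zero.1 h with h | h
        · norm_num at h
        · rcases hfc with h' | h' <;> rw [h'] at h <;> norm_num at h
      · exact hD h
    have hg'contOn : ContinuousOn g' s :=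
      ((continuousOn_const.mul hfcont).mul hf'cont).neg
    have hcwg : ContinuousWithinAt g' s c₀ := hg'contOn c₀ hc₀s
    rw [Metric.continuousWithinAt_iff] at hcwg
    obtain ⟨δ₀, hδ₀, hδ₀'⟩ := hcwg (|g' c₀| / 2) (by positivity)
    set δ := min (δ₀ / 2) ε with hδdef
    have hδpos : 0 < δ := lt_min (by linarith) hε
    have hδε : δ ≤ ε := min_le_right _ _
    have hsub : Ico (c₀ - δ) c₀ ⊆ Ico a c₀ := Ico_subset_Ico (by rw [ha]; linarith) le_rfl
    have hclose : ∀ x ∈ Ico (c₀ - δ) c₀, |g' x - g' c₀| < |g' c₀| / 2 := by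
      intro x hx
      have hxs : x ∈ s := hIcoSub (hsub hx)
      have hdist : dist x c₀ < δ₀ := by
        rw [Real.dist_eq, abs_sub_comm, abs_of_pos (sub_pos.2 hx.2)]
        have h1 : c₀ - x ≤ δ := by linarith [hx.1]
        have h2 : δ ≤ δ₀ / 2 := min_le_left _ _
        linarith
      have := hδ₀' hxs hdist
      rwa [Real.dist_eq] at this
    -- g' c₀ < 0
    have hneg : g' c₀ < 0 := by
      rcases lt_or_gt_of_ne hg'c₀ with h | h
      · exact h
      · exfalso
        set r := c₀ - δ / 2 with hrdef
        have hrI : r ∈ Ico (c₀ - δ) c₀ := ⟨by rw [hrdef]; linarith, by rw [hrdef]; linarith⟩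
        obtain ⟨ξ, hξ, hgr⟩ := mvtg r (hsub hrI)
        have hξI : ξ ∈ Ico (c₀ - δ) c₀ := ⟨le_trans hrI.1 hξ.1.le, hξ.2⟩
        have h1 := hclose ξ hξI
        have hgrpos := hgpos r (hsub hrI)
        have hrc : (0:ℝ) < c₀ - r := sub_pos.2 hrI.2
        have hg'ξneg : g' ξ < 0 := by
          by_contra hcon
          push_neg at hcon
          have h0 : 0 < -g' ξ * (c₀ - r) := by rw [← hgr]; exact hgrpos
          nlinarith [mul_nonneg hcon hrc.le]
        rw [abs_of_pos h] at h1
        have h6 := (abs_lt.1 h1).1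
        clear_value r δ g' g f' s a
        have h7 : g' c₀ / 2 < g' ξ := by linarith
        exact absurd hg'ξneg (by linarith)
    set K := -(g' c₀) / 2 with hKdef
    have hKpos : 0 < K := hKdef ▸ div_pos (neg_pos.2 hneg) two_pos
    have hlin : ∀ r ∈ Ico (c₀ - δ) c₀, K * (c₀ - r) ≤ g r := by
      intro r hr
      obtain ⟨ξ, hξ, hgr⟩ := mvtg r (hsub hr)
      have hξI : ξ ∈ Ico (c₀ - δ) c₀ := ⟨le_trans hr.1 hξ.1.le, hξ.2⟩
      have h1 := hclose ξ hξI
      have habs : |g' c₀| = -(g' c₀) := abs_of_neg hneg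
      rw [habs] at h1
      have h2 := abs_lt.1 h1
      have hrc : (0:ℝ) < c₀ - r := sub_pos.2 hr.2
      have h3 : -(g' ξ) ≥ K := by rw [hKdef]; linarith [h2.2]
      calc K * (c₀ - r) ≤ -(g' ξ) * (c₀ - r) := mul_le_mul_of_nonneg_right h3 hrc.le
        _ = g r := hgr.symm
    -- integrable majorant on Ico (c₀ - δ) c₀
    have hmaj : IntegrableOn
        (fun r : ℝ => (Real.sqrt K)⁻¹ * (c₀ - r) ^ (-(1/2) : ℝ)) (Ico (c₀ - δ) c₀) := by
      have h1 : IntervalIntegrable (fun x : ℝ => x ^ (-(1/2) : ℝ)) volume 0 δ :=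
        intervalIntegral.intervalIntegrable_rpow' (by norm_num)
      have h2 := h1.comp_sub_left c₀
      rw [sub_zero] at h2
      have h3 := h2.symm
      rw [intervalIntegrable_iff_integrableOn_Ioc_of_le (by linarith)] at h3
      rw [integrableOn_Ico_iff_integrableOn_Ioo]
      exact ((h3.mono_set Ioo_subset_Ioc_self)).const_mul _
    -- integrable near c₀
    have hnear : IntegrableOn (fun r => f r / Real.sqrt (g r)) (Ico (c₀ - δ) c₀) := by
      refine Integrable.mono' hmaj
        ((hIntCont.mono hsub).aestronglyMeasurable measurableSet_Ico) ?_
      rw [ae_restrict_iff' measurableSet_Ico]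
      refine ae_of_all _ fun r hr => ?_
      have hrIco : r ∈ Ico a c₀ := hsub hr
      have hrc : (0:ℝ) < c₀ - r := sub_pos.2 hr.2
      have hgp := hgpos r hrIco
      have hsq : (0:ℝ) < Real.sqrt (g r) := Real.sqrt_pos.2 hgp
      have hsqK : (0:ℝ) < Real.sqrt K := Real.sqrt_pos.2 hKpos
      have hsqrc : (0:ℝ) < Real.sqrt (c₀ - r) := Real.sqrt_pos.2 hrc
      have hgb : Real.sqrt K * Real.sqrt (c₀ - r) ≤ Real.sqrt (g r) := by
        rw [← Real.sqrt_mul hKpos.le]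
        exact Real.sqrt_le_sqrt (hlin r hr)
      have hfb : |f r| ≤ 1 := (hflt r hrIco).le
      rw [Real.norm_eq_abs, abs_div, abs_of_pos hsq]
      have hrw : (c₀ - r) ^ (-(1/2) : ℝ) = (Real.sqrt (c₀ - r))⁻¹ := by
        rw [show (-(1/2) : ℝ) = -(1/2) from rfl, Real.rpow_neg hrc.le,
          ← Real.sqrt_eq_rpow]
      rw [hrw]
      rw [div_le_iff₀ hsq]
      calc |f r| ≤ 1 := hfb
        _ ≤ (Real.sqrt K)⁻¹ * (Real.sqrt (c₀ - r))⁻¹ * (Real.sqrt K * Real.sqrt (c₀ - r)) := by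
            rw [show (Real.sqrt K)⁻¹ * (Real.sqrt (c₀ - r))⁻¹ * (Real.sqrt K * Real.sqrt (c₀ - r))
              = (Real.sqrt K * (Real.sqrt K)⁻¹) * (Real.sqrt (c₀ - r) * (Real.sqrt (c₀ - r))⁻¹)
              from by ring, mul_inv_cancel₀ hsqK.ne', mul_inv_cancel₀ hsqrc.ne', mul_one]
        _ ≤ (Real.sqrt K)⁻¹ * (Real.sqrt (c₀ - r))⁻¹ * Real.sqrt (g r) := by
            apply mul_le_mul_of_nonneg_left hgb
            positivity
    -- integrable away from c₀
    have hfar : IntegrableOn (fun r => f r / Real.sqrt (g r)) (Icc a (c₀ - δ)) := by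
      rcases le_or_gt a (c₀ - δ) with hle | hlt
      · have hsub2 : Icc a (c₀ - δ) ⊆ Ico a c₀ := fun x hx => ⟨hx.1, by linarith [hx.2]⟩
        exact (hIntCont.mono hsub2).integrableOn_compact isCompact_Icc
      · rw [Icc_eq_empty (by linarith)]
        exact integrableOn_empty
    have : IntegrableOn (fun r => f r / Real.sqrt (g r))
        (Icc a (c₀ - δ) ∪ Ico (c₀ - δ) c₀) := hfar.union hnear
    exact this.mono_set fun x hx => by
      rcases le_or_gt x (c₀ - δ) with h | h
      · exact Or.inl ⟨hx.1, h⟩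
      · exact Or.inr ⟨h.le, hx.2⟩
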